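/- (Serre's circumcentre lemma.) Let M be a complete, connected, simply connected Riemannian manifold of nonpositive sectional curvature and Ω ⊂ M a nonempty bounded set. Define r_Ω = inf{ r > 0 : ∃ p ∈ M with Ω ⊂ B̄(p,r) }. Then there exists a unique point p_Ω ∈ M with Ω ⊂ B̄(p_Ω, r_Ω). -/

import Mathlib

/-- (Serre's circumcentre lemma, Lemma `le:SERRE`.)
`M` is a complete metric space satisfying the semi-hyperbolic (CAT(0) /
nonpositive curvature) midpoint inequality: any two points `p₀, p₁` admit a
midpoint `m` with `d(m,q)² ≤ (d(p₀,q)² + d(p₁,q)²)/2 − d(p₀,p₁)²/4` for all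
`q` — this holds in every Hadamard manifold.  For every nonempty bounded set
`Ω ⊆ M`, with `r_Ω = inf{ r > 0 : ∃ p, Ω ⊆ B̄(p,r) }`, there is a unique
point `p_Ω` with `Ω ⊆ B̄(p_Ω, r_Ω)`. -/
theorem stmt_14 {M : Type*} [MetricSpace M] [CompleteSpace M]
    (hmid : ∀ p₀ p₁ : M, ∃ m : M, ∀ q : M,
      dist m q ^ 2 ≤ (dist p₀ q ^ 2 + dist p₁ q ^ 2) / 2 - dist p₀ p₁ ^ 2 / 4)
    (Ω : Set M) (hne : Ω.Nonempty) (hbdd : Bornology.IsBounded Ω) :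
    ∃! p : M, Ω ⊆ Metric.closedBall p
      (sInf {r : ℝ | 0 < r ∧ ∃ c : M, Ω ⊆ Metric.closedBall c r}) := by
  obtain ⟨q0, hq0⟩ := hne
  set S : Set ℝ := {r : ℝ | 0 < r ∧ ∃ c : M, Ω ⊆ Metric.closedBall c r} with hS
  set r₀ : ℝ := sInf S with hr₀
  -- S is nonempty and bounded below
  have hS_ne : S.Nonempty := by
    obtain ⟨R, hR⟩ := hbdd.subset_closedBall q0
    exact ⟨max R 1, lt_of_lt_of_le one_pos (le_max_right _ _), q0,
      hR.trans (Metric.closedBall_subset_closedBall (le_max_left _ _))⟩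
  have hS_bdd : BddBelow S := ⟨0, fun r hr => hr.1.le⟩
  have h0 : 0 ≤ r₀ := le_csInf hS_ne (fun r hr => hr.1.le)
  -- Key lemma: any "squared-radius" bound for a cover is at least r₀²
  have keyA : ∀ (c : M) (ρ : ℝ), (∀ q ∈ Ω, dist c q ^ 2 ≤ ρ) → r₀ ^ 2 ≤ ρ := by
    intro c ρ hc
    by_contra h
    push_neg at h
    have hρ0 : 0 ≤ ρ := le_trans (by positivity) (hc q0 hq0)
    have hr0pos : 0 < r₀ := by
      rcases h0.lt_or_eq with h' | h'
      · exact h'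
      · exfalso; rw [← h'] at h; simp at h; linarith
    set r' : ℝ := Real.sqrt ρ with hr'
    have hr'lt : r' < r₀ := by
      have := Real.sqrt_lt_sqrt hρ0 h
      rwa [Real.sqrt_sq h0] at this
    set r'' : ℝ := max r' (r₀ / 2) with hr''
    have hr''pos : 0 < r'' := lt_of_lt_of_le (by linarith) (le_max_right _ _)
    have hr''lt : r'' < r₀ := max_lt hr'lt (by linarith)
    have hmem : r'' ∈ S := by
      refine ⟨hr''pos, c, fun q hq => ?_⟩
      rw [Metric.mem_closedBall, dist_comm]
      refine le_trans ?_ (le_max_left _ _)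
      exact (Real.le_sqrt dist_nonneg hρ0).mpr (hc q hq)
    exact absurd (csInf_le hS_bdd hmem) (not_le.mpr hr''lt)
  -- choose almost-optimal centers
  have hcex : ∀ n : ℕ, ∃ c : M, ∀ q ∈ Ω, dist c q ^ 2 ≤ r₀ ^ 2 + 1 / (n + 1) := by
    intro n
    have hn1 : (0:ℝ) < 1 / (n + 1) := by positivity
    set δ : ℝ := min 1 ((1 / (n + 1)) / (2 * r₀ + 1)) with hδdef
    have hδpos : 0 < δ := lt_min one_pos (by positivity)
    obtain ⟨r, hrS, hrlt⟩ := exists_lt_of_csInf_lt hS_ne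
      (show r₀ < r₀ + δ by linarith)
    obtain ⟨hrpos, c, hcov⟩ := hrS
    refine ⟨c, fun q hq => ?_⟩
    have hd : dist c q ≤ r := by rw [dist_comm]; exact hcov hq
    have hδ1 : δ ≤ 1 := min_le_left _ _
    have hδ2 : δ * (2 * r₀ + 1) ≤ 1 / (n + 1) := by
      have := min_le_right (1:ℝ) ((1 / (n + 1)) / (2 * r₀ + 1))
      rw [← hδdef] at this
      calc δ * (2 * r₀ + 1) ≤ ((1 / (n + 1)) / (2 * r₀ + 1)) * (2 * r₀ + 1) := by
            apply mul_le_mul_of_nonneg_right this (by linarith)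
        _ = 1 / (n + 1) := by field_simp
    nlinarith [dist_nonneg (x := c) (y := q)]
  choose c hc using hcex
  -- distance between centers
  have hd2 : ∀ n m : ℕ, dist (c n) (c m) ^ 2 ≤ 2 * (1 / (n + 1) + 1 / (m + 1)) := by
    intro n m
    obtain ⟨mp, hmp⟩ := hmid (c n) (c m)
    have hkey := keyA mp ((r₀ ^ 2 + 1 / (n + 1) + (r₀ ^ 2 + 1 / (m + 1))) / 2
        - dist (c n) (c m) ^ 2 / 4) (fun q hq => by
      have := hmp q
      have h1 := hc n q hq
      have h2 := hc m q hq
      linarith)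
    linarith
  -- Cauchy
  have hb : ∀ N n m : ℕ, N ≤ n → N ≤ m →
      dist (c n) (c m) ≤ 2 * Real.sqrt (1 / (N + 1)) := by
    intro N n m hn hm
    have h1 : (1:ℝ) / (n + 1) ≤ 1 / (N + 1) := by
      apply one_div_le_one_div_of_le (by positivity)
      have : (N:ℝ) ≤ n := Nat.cast_le.mpr hn
      linarith
    have h2 : (1:ℝ) / (m + 1) ≤ 1 / (N + 1) := by
      apply one_div_le_one_div_of_le (by positivity)
      have : (N:ℝ) ≤ m := Nat.cast_le.mpr hm
      linarith
    have h3 : dist (c n) (c m) ^ 2 ≤ 4 * (1 / (N + 1)) := by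
      have := hd2 n m; linarith
    have h4 : dist (c n) (c m) ≤ Real.sqrt (4 * (1 / (N + 1))) :=
      (Real.le_sqrt dist_nonneg (by positivity)).mpr h3
    have h5 : Real.sqrt (4 * (1 / (N + 1))) = 2 * Real.sqrt (1 / (N + 1)) := by
      rw [show (4:ℝ) * (1 / (N + 1)) = (2 * Real.sqrt (1 / (N + 1))) ^ 2 by
        rw [mul_pow, Real.sq_sqrt (by positivity)]; ring]
      exact Real.sqrt_sq (by positivity)
    rwa [h5] at h4
  have hb0 : Filter.Tendsto (fun N : ℕ => 2 * Real.sqrt (1 / (N + 1)))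
      Filter.atTop (nhds 0) := by
    have h1 : Filter.Tendsto (fun N : ℕ => (1:ℝ) / (N + 1)) Filter.atTop (nhds 0) :=
      tendsto_one_div_add_atTop_nhds_zero_nat
    have h2 := (Real.continuous_sqrt.tendsto 0).comp h1
    simp only [Function.comp, Real.sqrt_zero] at h2
    have h3 := h2.const_mul (2:ℝ)
    simpa using h3
  have hcauchy : CauchySeq c :=
    cauchySeq_of_le_tendsto_0 _ (fun n m N hn hm => hb N n m hn hm) hb0
  obtain ⟨p, hp⟩ := cauchySeq_tendsto_of_complete hcauchy
  -- p covers Ω with radius r₀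
  have hcover : ∀ q ∈ Ω, dist q p ≤ r₀ := by
    intro q hq
    have hdq : Filter.Tendsto (fun n => dist (c n) q) Filter.atTop (nhds (dist p q)) :=
      hp.dist tendsto_const_nhds
    have hub : ∀ n, dist (c n) q ≤ Real.sqrt (r₀ ^ 2 + 1 / (n + 1)) := fun n =>
      (Real.le_sqrt dist_nonneg (by positivity)).mpr (hc n q hq)
    have hsq : Filter.Tendsto (fun n : ℕ => Real.sqrt (r₀ ^ 2 + 1 / (n + 1)))
        Filter.atTop (nhds r₀) := by
      have h1 : Filter.Tendsto (fun n : ℕ => r₀ ^ 2 + (1:ℝ) / (n + 1)) Filter.atTop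
          (nhds (r₀ ^ 2)) := by
        have := tendsto_one_div_add_atTop_nhds_zero_nat.const_add (r₀ ^ 2)
        simpa using this
      have h2 := (Real.continuous_sqrt.tendsto (r₀ ^ 2)).comp h1
      rw [Real.sqrt_sq h0] at h2
      exact h2
    have := le_of_tendsto_of_tendsto' hdq hsq hub
    rwa [dist_comm] at this
  refine ⟨p, fun q hq => Metric.mem_closedBall.mpr (hcover q hq), ?_⟩
  -- uniqueness
  intro p' hp'
  by_contra hne'
  obtain ⟨mp, hmp⟩ := hmid p' p
  have hkey := keyA mp (r₀ ^ 2 - dist p' p ^ 2 / 4) (fun q hq => by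
    have h1 : dist p' q ≤ r₀ := by rw [dist_comm]; exact hp' hq
    have h2 : dist p q ≤ r₀ := by rw [dist_comm]; exact hcover q hq
    have := hmp q
    nlinarith [dist_nonneg (x := p') (y := q), dist_nonneg (x := p) (y := q)])
  have : dist p' p = 0 := by nlinarith [dist_nonneg (x := p') (y := p)]
  exact hne' (dist_eq_zero.mp this)
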